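/- (Uniqueness of the discontinuity location for the Euler–GBM scheme.) Let X_0 > 0, a > 0, N ≥ 1, and c_0, …, c_{N−1} ∈ ℝ. Define f(z) = X_0 · ∏_{n=0}^{N−1} (1 + a·z + c_n) and set D = {z ∈ ℝ : 1 + a·z + c_n > 0 for all n = 0, …, N−1}. Then D is a nonempty open interval of the form (z̄, ∞), f is strictly increasing on D, f(z) → +∞ as z → +∞, and f(z) → 0 as z → z̄⁺; consequently, for every K > 0 the equation f(z) = K has exactly one solution in D. -/

import Mathlib

open Filter

/-- uniqueness of the discontinuity location for the Euler–GBM scheme: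
for `f(z) = X₀ ∏_{n<N} (1 + a z + c_n)` with `X₀, a > 0`, the admissible domain
`D = {z : 1 + a z + c_n > 0 ∀ n}` is a half-line `(z̄, ∞)`, `f` is strictly increasing on
`D`, `f → ∞` at `+∞`, `f → 0` as `z → z̄⁺`, and for every `K > 0` the equation `f(z) = K`
has exactly one solution in `D`. -/
theorem euler_gbm_unique_root (X₀ a : ℝ) (hX : 0 < X₀) (ha : 0 < a)
    (N : ℕ) (hN : 1 ≤ N) (c : Fin N → ℝ) :
    ∃ zbar : ℝ,
      {z : ℝ | ∀ n : Fin N, 0 < 1 + a * z + c n} = Set.Ioi zbar ∧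
      StrictMonoOn (fun z => X₀ * ∏ n, (1 + a * z + c n)) (Set.Ioi zbar) ∧
      Tendsto (fun z => X₀ * ∏ n, (1 + a * z + c n)) atTop atTop ∧
      Tendsto (fun z => X₀ * ∏ n, (1 + a * z + c n)) (nhdsWithin zbar (Set.Ioi zbar)) (nhds 0) ∧
      ∀ K : ℝ, 0 < K →
        ∃! z : ℝ, z ∈ Set.Ioi zbar ∧ X₀ * ∏ n, (1 + a * z + c n) = K := by
  haveI : Nonempty (Fin N) := Fin.pos_iff_nonempty.mp (by omega)
  set g : Fin N → ℝ := fun n => (-(1 + c n)) / a with hg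
  set zbar := Finset.univ.sup' Finset.univ_nonempty g with hzbar
  set f : ℝ → ℝ := fun z => X₀ * ∏ n, (1 + a * z + c n) with hf
  have hfac : ∀ (z : ℝ) (n : Fin N), (0 < 1 + a * z + c n ↔ g n < z) := by
    intro z n
    rw [hg, div_lt_iff₀ ha]
    constructor <;> intro h <;> nlinarith
  have hD : {z : ℝ | ∀ n : Fin N, 0 < 1 + a * z + c n} = Set.Ioi zbar := by
    ext z
    simp only [Set.mem_setOf_eq, Set.mem_Ioi, hzbar, Finset.sup'_lt_iff]
    constructor
    · intro h n _; exact (hfac z n).mp (h n)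
    · intro h n; exact (hfac z n).mpr (h n (Finset.mem_univ n))
  have hpos : ∀ z ∈ Set.Ioi zbar, ∀ n : Fin N, 0 < 1 + a * z + c n := by
    intro z hz n
    rw [← hD] at hz; exact hz n
  have hsm : StrictMonoOn f (Set.Ioi zbar) := by
    intro x hx y hy hxy
    refine mul_lt_mul_of_pos_left ?_ hX
    refine Finset.prod_lt_prod (fun n _ => hpos x hx n) (fun n _ => by nlinarith) ?_
    exact ⟨Classical.arbitrary (Fin N), Finset.mem_univ _, by nlinarith⟩
  have hcont : Continuous f := by
    apply Continuous.mul continuous_const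
    exact continuous_finset_prod _ (fun n _ => by continuity)
  have htop : Tendsto f atTop atTop := by
    apply Tendsto.const_mul_atTop hX
    have key : ∀ s : Finset (Fin N), s.Nonempty →
        Tendsto (fun z => ∏ n ∈ s, (1 + a * z + c n)) atTop atTop := by
      intro s hs
      induction hs using Finset.Nonempty.cons_induction with
      | singleton n =>
          simp only [Finset.prod_singleton]
          have := (tendsto_atTop_add_const_left atTop (1 : ℝ)
            ((tendsto_const_mul_atTop_of_pos ha).mpr tendsto_id))
          simpa using tendsto_atTop_add_const_right atTop (c n) this
      | cons n s hns hs ih =>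
          simp only [Finset.prod_cons]
          refine Tendsto.atTop_mul_atTop₀ ?_ ih
          have := (tendsto_const_mul_atTop_of_pos ha).mpr tendsto_id
          have := tendsto_atTop_add_const_left atTop (1 : ℝ) this
          simpa using tendsto_atTop_add_const_right atTop (c n) this
    exact key Finset.univ Finset.univ_nonempty
  have hfzbar : f zbar = 0 := by
    obtain ⟨n, _, hn⟩ := Finset.exists_mem_eq_sup' Finset.univ_nonempty g
    have : 1 + a * zbar + c n = 0 := by
      rw [hzbar, hn, hg]; field_simp; ring
    rw [hf]
    simp only
    rw [Finset.prod_eq_zero (Finset.mem_univ n) this, mul_zero]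
  have hto0 : Tendsto f (nhdsWithin zbar (Set.Ioi zbar)) (nhds 0) := by
    have := (hcont.tendsto zbar).mono_left (nhdsWithin_le_nhds (s := Set.Ioi zbar))
    rwa [hfzbar] at this
  refine ⟨zbar, hD, hsm, htop, hto0, ?_⟩
  intro K hK
  -- existence: pick x with f x < K, y with f y > K
  have hx : ∃ x ∈ Set.Ioi zbar, f x < K := by
    have : ∀ᶠ z in nhdsWithin zbar (Set.Ioi zbar), f z < K :=
      hto0.eventually (Filter.Tendsto.eventually_lt_const hK tendsto_id)
    have hne : (nhdsWithin zbar (Set.Ioi zbar)).NeBot := nhdsWithin_Ioi_neBot (le_refl zbar)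
    obtain ⟨x, hx1, hx2⟩ := (this.and self_mem_nhdsWithin).exists
    exact ⟨x, hx2, hx1⟩
  obtain ⟨x, hxD, hxK⟩ := hx
  have hy : ∃ y, x < y ∧ K < f y := by
    have h1 : ∀ᶠ y in atTop, K < f y := htop.eventually_gt_atTop K
    have h2 : ∀ᶠ y in atTop, x < y := eventually_gt_atTop x
    obtain ⟨y, hy1, hy2⟩ := (h2.and h1).exists
    exact ⟨y, hy1, hy2⟩
  obtain ⟨y, hxy, hyK⟩ := hy
  have : K ∈ Set.Icc (f x) (f y) := ⟨hxK.le, hyK.le⟩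
  obtain ⟨z, hz, hfz⟩ := intermediate_value_Icc hxy.le (hcont.continuousOn) this
  have hzD : z ∈ Set.Ioi zbar := lt_of_lt_of_le hxD hz.1
  refine ⟨z, ⟨hzD, hfz⟩, ?_⟩
  rintro w ⟨hwD, hwK⟩
  exact hsm.injOn hwD hzD (hwK.trans hfz.symm)
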